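/- Suppose (ℬ ⊆ 𝒜, E) has a unitary orthonormal basis {U₀,…,U_{d-1}}, 𝒜₁ is the Jones basic construction with Jones projection J, and E₁ : 𝒜₁ → 𝒜 is the dual conditional expectation. Then the elements W_j = Σ_{k=0}^{d-1} e^{2πi jk/d} U_k J U_k* for 0 ≤ j ≤ d-1 form a unitary orthonormal basis for (𝒜 ⊆ 𝒜₁, E₁). In particular Σ_k U_k J U_k* = 1 and each W_j is unitary. -/

import Mathlib

open Finset

/-- Basic construction: if (ℬ ⊆ 𝒜, E) has a unitary orthonormal basis
{U₀,…,U_{d-1}}, 𝒜₁ is the Jones basic construction with Jones projection J and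
dual conditional expectation E₁, then the elements
W_j = ∑_k e^{2πi jk/d} U_k J U_k* form a unitary orthonormal basis for
(𝒜 ⊆ 𝒜₁, E₁); in particular ∑_k U_k J U_k* = 1 and each W_j is unitary. -/
theorem basic_construction_unitary_onb
    {A₁ : Type*} [Ring A₁] [StarRing A₁] [Algebra ℂ A₁] [StarModule ℂ A₁]
    (SA SB : StarSubalgebra ℂ A₁) (hBA : SB ≤ SA)
    (d : ℕ) (hd : 0 < d)
    (E E₁ : A₁ →ₗ[ℂ] A₁)
    -- E is a conditional expectation of 𝒜 onto ℬ
    (hEmem : ∀ x ∈ SA, E x ∈ SB) (hEfix : ∀ y ∈ SB, E y = y)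
    (hEbim : ∀ y z, y ∈ SB → z ∈ SB → ∀ x, E (y * x * z) = y * E x * z)
    -- J is the Jones projection: J* = J = J², J x J = E(x) J for x ∈ 𝒜,
    -- and 𝒜₁ = span 𝒜 J 𝒜
    (J : A₁) (hJstar : star J = J) (hJidem : J * J = J)
    (hJE : ∀ x ∈ SA, J * x * J = E x * J)
    (hspan : ∀ z : A₁,
      z ∈ Submodule.span ℂ {w : A₁ | ∃ x ∈ SA, ∃ y ∈ SA, w = x * J * y})
    -- E₁ is the dual conditional expectation of 𝒜₁ onto 𝒜, E₁(xJy) = d⁻¹ xy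
    (hE₁mem : ∀ x, E₁ x ∈ SA) (hE₁fix : ∀ y ∈ SA, E₁ y = y)
    (hE₁bim : ∀ y z, y ∈ SA → z ∈ SA → ∀ x, E₁ (y * x * z) = y * E₁ x * z)
    (hE₁J : ∀ x ∈ SA, ∀ y ∈ SA, E₁ (x * J * y) = ((d : ℂ)⁻¹) • (x * y))
    -- {U_k} is a unitary orthonormal basis for (ℬ ⊆ 𝒜, E)
    (U : Fin d → A₁) (hUmem : ∀ t, U t ∈ SA)
    (hUu : ∀ t, U t ∈ unitary A₁)
    (hUorth : ∀ t t', E (star (U t) * U t') = if t = t' then 1 else 0)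
    (hUbasis : ∀ x ∈ SA, x = ∑ t, U t * E (star (U t) * x)) :
    ∀ W : Fin d → A₁,
      (∀ j, W j = ∑ t : Fin d, Complex.exp (2 * Real.pi * Complex.I *
          ((j : ℕ) * (t : ℕ) / (d : ℂ))) • (U t * J * star (U t))) →
      (∑ t, U t * J * star (U t) = 1) ∧
      (∀ j, W j ∈ unitary A₁) ∧
      (∀ j j', E₁ (star (W j) * W j') = if j = j' then 1 else 0) ∧
      (∀ x : A₁, x = ∑ j, W j * E₁ (star (W j) * x)) := by
  intro W hW
  have hdC : (d : ℂ) ≠ 0 := Nat.cast_ne_zero.mpr hd.ne'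
  set θ : Fin d → Fin d → ℂ :=
    fun j t => 2 * Real.pi * Complex.I * ((j : ℕ) * (t : ℕ) / (d : ℂ)) with hθ
  set P : Fin d → A₁ := fun t => U t * J * star (U t) with hP
  have hW' : ∀ j, W j = ∑ t, Complex.exp (θ j t) • P t := hW
  have hUstar : ∀ t, star (U t) ∈ SA := fun t => star_mem (hUmem t)
  have hUst : ∀ t, star (U t) * U t = 1 := fun t => (Unitary.mem_iff.mp (hUu t)).1
  have hUts : ∀ t, U t * star (U t) = 1 := fun t => (Unitary.mem_iff.mp (hUu t)).2
  -- P t * P s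
  have hPmul : ∀ t s, P t * P s = if t = s then P t else 0 := by
    intro t s
    have h1 : P t * P s = U t * (J * (star (U t) * U s) * J) * star (U s) := by
      simp only [hP, mul_assoc]
    rw [h1, hJE _ (SA.mul_mem (hUstar t) (hUmem s)), hUorth]
    split_ifs with hts
    · subst hts; simp [hP, mul_assoc]
    · simp
  have hPstar : ∀ t, star (P t) = P t := by
    intro t
    simp only [hP, star_mul, star_star, hJstar, mul_assoc]
  -- ∑ P t = 1
  have honeP : (∑ t, P t) = 1 := by
    have hfix : ∀ z ∈ Submodule.span ℂ {w : A₁ | ∃ x ∈ SA, ∃ y ∈ SA, w = x * J * y},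
        (∑ t, P t) * z = z := by
      intro z hz
      induction hz using Submodule.span_induction with
      | mem w hw =>
        obtain ⟨x, hx, y, hy, rfl⟩ := hw
        have h1 : ∀ t, P t * (x * J * y) = U t * E (star (U t) * x) * (J * y) := by
          intro t
          have h2 : P t * (x * J * y) = U t * (J * (star (U t) * x) * J) * y := by
            simp only [hP, mul_assoc]
          rw [h2, hJE _ (SA.mul_mem (hUstar t) hx)]
          simp only [mul_assoc]
        calc (∑ t, P t) * (x * J * y)
            = ∑ t, U t * E (star (U t) * x) * (J * y) := by
              rw [Finset.sum_mul]; exact Finset.sum_congr rfl fun t _ => h1 t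
          _ = (∑ t, U t * E (star (U t) * x)) * (J * y) := by rw [Finset.sum_mul]
          _ = x * (J * y) := by rw [← hUbasis x hx]
          _ = x * J * y := by rw [mul_assoc]
      | zero => simp
      | add a b _ _ ha hb => rw [mul_add, ha, hb]
      | smul r a _ ha => rw [mul_smul_comm, ha]
    have h1 := hfix 1 (hspan 1)
    rwa [mul_one] at h1
  -- key lemma: ∑ t, U t * J * E (U t* a) = a * J
  have hkey : ∀ a, a ∈ SA → (∑ t, U t * J * E (star (U t) * a)) = a * J := by
    intro a ha
    have hya : ∀ t, E (star (U t) * a) ∈ SB := fun t => hEmem _ (SA.mul_mem (hUstar t) ha)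
    have haJ : a * J = ∑ s, a * E (U s) * (J * star (U s)) := by
      have h0 : a * J = a * J * (∑ s, P s) := by rw [honeP, mul_one]
      rw [h0, Finset.mul_sum]
      refine Finset.sum_congr rfl fun s _ => ?_
      have h2 : a * J * P s = a * (J * U s * J) * star (U s) := by
        simp only [hP, mul_assoc]
      rw [h2, hJE _ (hUmem s)]
      simp only [mul_assoc]
    have hterm : ∀ t, U t * J * E (star (U t) * a)
        = ∑ s, U t * (E (star (U t) * a) * E (U s)) * (J * star (U s)) := by
      intro t
      have h0 : U t * J * E (star (U t) * a)
          = U t * J * E (star (U t) * a) * (∑ s, P s) := by rw [honeP, mul_one]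
      rw [h0, Finset.mul_sum]
      refine Finset.sum_congr rfl fun s _ => ?_
      have h2 : U t * J * E (star (U t) * a) * P s
          = U t * (J * (E (star (U t) * a) * U s) * J) * star (U s) := by
        simp only [hP, mul_assoc]
      rw [h2, hJE _ (SA.mul_mem (hBA (hya t)) (hUmem s))]
      have h3 : E (E (star (U t) * a) * U s) = E (star (U t) * a) * E (U s) := by
        have h4 := hEbim (E (star (U t) * a)) 1 (hya t) SB.one_mem (U s)
        simpa using h4
      rw [h3]
      simp only [mul_assoc]
    calc (∑ t, U t * J * E (star (U t) * a))
        = ∑ s, (∑ t, U t * (E (star (U t) * a) * E (U s))) * (J * star (U s)) := by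
          simp_rw [hterm]
          rw [Finset.sum_comm]
          exact Finset.sum_congr rfl fun s _ => by rw [Finset.sum_mul]
      _ = ∑ s, a * E (U s) * (J * star (U s)) := by
          refine Finset.sum_congr rfl fun s _ => ?_
          congr 1
          simp_rw [← mul_assoc]
          rw [← Finset.sum_mul, ← hUbasis a ha]
      _ = a * J := haJ.symm
  -- conjugation of scalars
  have hθconj : ∀ j t, (starRingEnd ℂ) (Complex.exp (θ j t)) = Complex.exp (-θ j t) := by
    intro j t
    rw [← Complex.exp_conj]
    congr 1
    simp only [hθ, map_neg, map_mul, map_div₀, Complex.conj_I, map_natCast, map_ofNat,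
      Complex.conj_ofReal]
    ring
  have hWs : ∀ j, star (W j) = ∑ t, Complex.exp (-θ j t) • P t := by
    intro j
    rw [hW' j, star_sum]
    refine Finset.sum_congr rfl fun t _ => ?_
    rw [star_smul, hPstar t, Complex.star_def, hθconj]
  -- product of two P-combinations
  have hprod : ∀ (a b : Fin d → ℂ),
      (∑ t, a t • P t) * (∑ s, b s • P s) = ∑ t, (a t * b t) • P t := by
    intro a b
    rw [Finset.sum_mul]
    refine Finset.sum_congr rfl fun t _ => ?_
    rw [Finset.mul_sum]
    have h1 : ∀ s, a t • P t * (b s • P s) = (a t * b s) • (if t = s then P t else 0) := by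
      intro s
      rw [smul_mul_smul_comm, hPmul]
    simp_rw [h1]
    simp
  -- character orthogonality
  have hchar : ∀ j j' : Fin d,
      (∑ t : Fin d, Complex.exp (-θ j t) * Complex.exp (θ j' t))
        = if j = j' then (d : ℂ) else 0 := by
    intro j j'
    set m : ℤ := ((j' : ℕ) : ℤ) - ((j : ℕ) : ℤ) with hm
    have hterm : ∀ t : Fin d, Complex.exp (-θ j t) * Complex.exp (θ j' t)
        = Complex.exp (2 * Real.pi * Complex.I * m / d) ^ (t : ℕ) := by
      intro t
      rw [← Complex.exp_nat_mul, ← Complex.exp_add]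
      congr 1
      simp only [hθ, hm]
      push_cast
      field_simp
      ring
    rw [Finset.sum_congr rfl fun t _ => hterm t,
      Fin.sum_univ_eq_sum_range (fun i => Complex.exp (2 * Real.pi * Complex.I * m / d) ^ i) d]
    by_cases hjj : j = j'
    · subst hjj
      rw [if_pos rfl]
      have hm0 : m = 0 := by simp [hm]
      rw [hm0]
      simp
    · rw [if_neg hjj]
      have hz1 : Complex.exp (2 * Real.pi * Complex.I * m / d) ≠ 1 := by
        intro hcon
        obtain ⟨n, hn⟩ := Complex.exp_eq_one_iff.mp hcon
        have hmnd : (m : ℂ) = n * d := by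
          have h2 : (2 * (Real.pi : ℂ) * Complex.I) * (m : ℂ)
              = (2 * (Real.pi : ℂ) * Complex.I) * ((n : ℂ) * d) := by
            field_simp at hn
            linear_combination (2 * (Real.pi : ℂ) * Complex.I) * hn
          have := mul_left_cancel₀ Complex.two_pi_I_ne_zero h2
          exact this
        have hmnd' : m = n * d := by exact_mod_cast hmnd
        have hdvd : (d : ℤ) ∣ m := ⟨n, by linarith [hmnd']⟩
        have hne : (j : ℕ) ≠ (j' : ℕ) := fun h => hjj (Fin.val_injective h)
        have hj1 : (j : ℕ) < d := j.isLt
        have hj2 : (j' : ℕ) < d := j'.isLt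
        have hm0 : m = 0 := Int.eq_zero_of_dvd_of_natAbs_lt_natAbs hdvd (by omega)
        omega
      rw [geom_sum_eq hz1]
      have hzd : Complex.exp (2 * Real.pi * Complex.I * m / d) ^ d = 1 := by
        rw [← Complex.exp_nat_mul]
        have h5 : (d : ℂ) * (2 * Real.pi * Complex.I * m / d) = m * (2 * Real.pi * Complex.I) := by
          field_simp
        rw [h5, Complex.exp_int_mul_two_pi_mul_I]
      rw [hzd]
      simp
  -- E₁ of P t
  have hE₁P : ∀ t, E₁ (P t) = ((d : ℂ)⁻¹) • 1 := by
    intro t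
    have h1 := hE₁J (U t) (hUmem t) (star (U t)) (hUstar t)
    rw [hUts t] at h1
    exact h1
  -- unitarity
  have hWu : ∀ j, W j ∈ unitary A₁ := by
    intro j
    rw [Unitary.mem_iff]
    constructor
    · rw [hWs j, hW' j, hprod]
      have h1 : ∀ t : Fin d, Complex.exp (-θ j t) * Complex.exp (θ j t) = 1 := by
        intro t; rw [← Complex.exp_add]; simp
      simp_rw [h1, one_smul]
      exact honeP
    · rw [hWs j, hW' j, hprod]
      have h1 : ∀ t : Fin d, Complex.exp (θ j t) * Complex.exp (-θ j t) = 1 := by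
        intro t; rw [← Complex.exp_add]; simp
      simp_rw [h1, one_smul]
      exact honeP
  -- orthonormality
  have horth : ∀ j j', E₁ (star (W j) * W j') = if j = j' then 1 else 0 := by
    intro j j'
    rw [hWs j, hW' j', hprod, map_sum]
    simp_rw [map_smul, hE₁P]
    rw [← Finset.sum_smul, hchar j j']
    split_ifs with h
    · rw [smul_smul, mul_inv_cancel₀ hdC, one_smul]
    · simp
  -- reconstruction
  have hmain : ∀ z : A₁, (∑ t, (d : ℂ) • (P t * E₁ (P t * z))) = z := by
    intro z
    have hz := hspan z
    induction hz using Submodule.span_induction with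
    | mem w hw =>
      obtain ⟨a, ha, b, hb, rfl⟩ := hw
      have hstep : ∀ t, P t * E₁ (P t * (a * J * b))
          = ((d : ℂ)⁻¹) • (U t * J * E (star (U t) * a) * b) := by
        intro t
        have h1 : P t * (a * J * b) = U t * E (star (U t) * a) * J * b := by
          have h2 : P t * (a * J * b) = U t * (J * (star (U t) * a) * J) * b := by
            simp only [hP, mul_assoc]
          rw [h2, hJE _ (SA.mul_mem (hUstar t) ha)]
          simp only [mul_assoc]
        rw [h1, hE₁J _ (SA.mul_mem (hUmem t) (hBA (hEmem _ (SA.mul_mem (hUstar t) ha)))) b hb]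
        rw [mul_smul_comm]
        congr 1
        have h3 : P t * (U t * E (star (U t) * a) * b)
            = U t * (J * (star (U t) * U t) * (E (star (U t) * a) * b)) := by
          simp only [hP, mul_assoc]
        rw [h3, hUst t]
        simp only [mul_one, one_mul, mul_assoc]
      calc (∑ t, (d : ℂ) • (P t * E₁ (P t * (a * J * b))))
          = ∑ t, U t * J * E (star (U t) * a) * b := by
            refine Finset.sum_congr rfl fun t _ => ?_
            rw [hstep t, smul_smul, mul_inv_cancel₀ hdC, one_smul]
        _ = (∑ t, U t * J * E (star (U t) * a)) * b := by rw [Finset.sum_mul]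
        _ = a * J * b := by rw [hkey a ha]
    | zero => simp
    | add u v _ _ hu hv =>
      simp only [mul_add, map_add, smul_add, Finset.sum_add_distrib, hu, hv]
    | smul r u _ hu =>
      calc (∑ t, (d : ℂ) • (P t * E₁ (P t * (r • u))))
          = r • ∑ t, (d : ℂ) • (P t * E₁ (P t * u)) := by
            rw [Finset.smul_sum]
            refine Finset.sum_congr rfl fun t _ => ?_
            rw [mul_smul_comm, map_smul, mul_smul_comm, smul_comm]
        _ = r • u := by rw [hu]
  have hrecon : ∀ x : A₁, x = ∑ j, W j * E₁ (star (W j) * x) := by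
    intro x
    have hterm : ∀ jj : Fin d, W jj * E₁ (star (W jj) * x)
        = ∑ s, ∑ t, (Complex.exp (θ jj s) * Complex.exp (-θ jj t))
            • (P s * E₁ (P t * x)) := by
      intro jj
      rw [hWs jj, hW' jj]
      simp_rw [Finset.sum_mul, smul_mul_assoc, map_sum, map_smul, Finset.mul_sum,
        mul_smul_comm, Finset.smul_sum, smul_smul]
    have hchar2 : ∀ s t : Fin d,
        (∑ jj : Fin d, Complex.exp (θ jj s) * Complex.exp (-θ jj t))
          = if t = s then (d : ℂ) else 0 := by
      intro s t
      rw [← hchar t s]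
      refine Finset.sum_congr rfl fun jj _ => ?_
      have e1 : -θ jj t = -θ t jj := by simp only [hθ]; ring
      have e2 : θ jj s = θ s jj := by simp only [hθ]; ring
      rw [mul_comm, e1, e2]
    have hsum : (∑ jj, W jj * E₁ (star (W jj) * x)) = x := by
      calc (∑ jj, W jj * E₁ (star (W jj) * x))
          = ∑ s, ∑ t, (∑ jj : Fin d, Complex.exp (θ jj s) * Complex.exp (-θ jj t))
              • (P s * E₁ (P t * x)) := by
            simp_rw [hterm]
            rw [Finset.sum_comm]
            refine Finset.sum_congr rfl fun s _ => ?_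
            rw [Finset.sum_comm]
            refine Finset.sum_congr rfl fun t _ => ?_
            rw [Finset.sum_smul]
        _ = ∑ s, (d : ℂ) • (P s * E₁ (P s * x)) := by
            refine Finset.sum_congr rfl fun s _ => ?_
            simp_rw [hchar2]
            rw [Finset.sum_eq_single s]
            · rw [if_pos rfl]
            · intro t _ hts; rw [if_neg hts, zero_smul]
            · intro h; exact absurd (Finset.mem_univ s) h
        _ = x := hmain x
    exact hsum.symm
  exact ⟨honeP, hWu, horth, hrecon⟩
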